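/- (Pascal-type identity for K-binomial coefficients.) For all integers k ≥ 1 and 0 ≤ m ≤ k, the identity binom(k,m)_K = binom(k−1,m−1)_K^q + binom(k−1,m)_K^q · D_m^{q−1} holds in F_q(x), where by convention binom(k−1,−1)_K = 0 and binom(k−1,k)_K = 0. -/

import Mathlib

noncomputable section

open Polynomial

/-- The Carlitz factorial `D_i = [i]·[i-1]^q ⋯ [1]^{q^{i-1}} ∈ F_q[x]`
(where `[i] = x^{q^i} - x`), defined via `D_0 = 1`, `D_{i+1} = [i+1]·D_i^q`. -/
def Dcar (q : ℕ) (F : Type) [Field F] : ℕ → Polynomial F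
  | 0 => 1
  | i + 1 => (X ^ q ^ (i + 1) - X) * (Dcar q F i) ^ q

/-- `L_i = [i]·[i-1] ⋯ [1] ∈ F_q[x]`, via `L_0 = 1`, `L_{i+1} = [i+1]·L_i`. -/
def Lcar (q : ℕ) (F : Type) [Field F] : ℕ → Polynomial F
  | 0 => 1
  | i + 1 => (X ^ q ^ (i + 1) - X) * Lcar q F i

/-- The `K`-binomial coefficient `binom(k,m)_K = D_k/(D_m · D_{k-m}^{q^m}) ∈ F_q(x)`
for `0 ≤ m ≤ k`, with the convention that it vanishes for `m < 0` or `m > k`. -/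
def Kb (q : ℕ) (F : Type) [Field F] (k : ℕ) (m : ℤ) : RatFunc F :=
  if 0 ≤ m ∧ m ≤ (k : ℤ) then
    algebraMap (Polynomial F) (RatFunc F) (Dcar q F k) /
      (algebraMap (Polynomial F) (RatFunc F) (Dcar q F m.toNat) *
        algebraMap (Polynomial F) (RatFunc F) (Dcar q F (k - m.toNat)) ^ q ^ m.toNat)
  else 0

/-- The `π`-adic additive valuation `v_π` on `F_q(x)`, normalized by `v_π(π) = 1`
(for `π` irreducible): the multiplicity of `π` in the numerator minus the
multiplicity of `π` in the denominator. -/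
def vpol {F : Type} [Field F] (π : Polynomial F) (t : RatFunc F) : ℤ :=
  (multiplicity π t.num : ℤ) - (multiplicity π t.denom : ℤ)

lemma Dcar_succ (q : ℕ) (F : Type) [Field F] (i : ℕ) :
    Dcar q F (i + 1) = (X ^ q ^ (i + 1) - X) * (Dcar q F i) ^ q := rfl

lemma Dcar_zero (q : ℕ) (F : Type) [Field F] : Dcar q F 0 = 1 := rfl

lemma X_pow_sub_X_ne_zero {F : Type} [Field F] {N : ℕ} (hN : 2 ≤ N) :
    (X ^ N - X : Polynomial F) ≠ 0 := by
  intro h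
  have h2 := congrArg natDegree (sub_eq_zero.mp h)
  rw [natDegree_X_pow, natDegree_X] at h2
  omega

lemma Dcar_ne_zero {F : Type} [Field F] {q : ℕ} (hq : 2 ≤ q) :
    ∀ i, Dcar q F i ≠ 0
  | 0 => one_ne_zero
  | i + 1 => by
      rw [Dcar_succ]
      exact mul_ne_zero
        (X_pow_sub_X_ne_zero (le_trans hq (Nat.le_self_pow (by omega) q)))
        (pow_ne_zero _ (Dcar_ne_zero hq i))

lemma pascal_field_key {K : Type} [Field K] (a x y b g : K) (hx : x ≠ 0) (hy : y ≠ 0)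
    (hb : b ≠ 0) (hg : g ≠ 0) (r : ℕ) :
    (x + y) * a / (x * b * (y * g))
      = a / (b * (y * g)) + a / ((x * b) ^ (r + 1) * g) * (x * b) ^ r := by
  have hd1 : (b * (y * g) : K) ≠ 0 := mul_ne_zero hb (mul_ne_zero hy hg)
  have hd2 : ((x * b) ^ (r + 1) * g : K) ≠ 0 :=
    mul_ne_zero (pow_ne_zero _ (mul_ne_zero hx hb)) hg
  have hd0 : (x * b * (y * g) : K) ≠ 0 :=
    mul_ne_zero (mul_ne_zero hx hb) (mul_ne_zero hy hg)
  rw [div_mul_eq_mul_div, div_add_div _ _ hd1 hd2,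
    div_eq_div_iff hd0 (mul_ne_zero hd1 hd2)]
  ring

/-- **Pascal-type identity for `K`-binomial coefficients (Proposition 5).**
For `k ≥ 1` and `0 ≤ m ≤ k`,
`binom(k,m)_K = binom(k−1,m−1)_K^q + binom(k−1,m)_K^q · D_m^{q−1}`,
with the conventions `binom(k−1,−1)_K = 0` and `binom(k−1,k)_K = 0`
(built into the definition of `Kb`). -/
theorem Kbinom_pascal
    (p e q : ℕ) [Fact p.Prime] (he : 0 < e) (hq : q = p ^ e)
    (k : ℕ) (hk : 1 ≤ k) (m : ℤ) (hm0 : 0 ≤ m) (hmk : m ≤ (k : ℤ)) :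
    Kb q (GaloisField p e) k m
      = Kb q (GaloisField p e) (k - 1) (m - 1) ^ q
        + Kb q (GaloisField p e) (k - 1) m ^ q *
          algebraMap (Polynomial (GaloisField p e)) (RatFunc (GaloisField p e))
            (Dcar q (GaloisField p e) m.toNat) ^ (q - 1) := by
  have hp2 : 2 ≤ p := (Fact.out : p.Prime).two_le
  have hq2 : 2 ≤ q := by
    rw [hq]; exact le_trans hp2 (Nat.le_self_pow (by omega) p)
  set F := GaloisField p e with hF
  set φ := algebraMap (Polynomial F) (RatFunc F) with hφ
  have φne : ∀ g : Polynomial F, g ≠ 0 → φ g ≠ 0 := fun g hg =>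
    (map_ne_zero_iff φ (IsFractionRing.injective _ _)).mpr hg
  have hDne : ∀ i, φ (Dcar q F i) ≠ 0 := fun i => φne _ (Dcar_ne_zero hq2 i)
  lift m to ℕ using hm0 with n hn
  have hnk : n ≤ k := by exact_mod_cast hmk
  rcases Nat.eq_zero_or_pos n with h0 | hn1
  · -- case m = 0
    subst h0
    have e1 : Kb q F k (0 : ℤ) = 1 := by
      rw [Kb, if_pos ⟨le_refl _, by exact_mod_cast Nat.zero_le k⟩]
      simp [Dcar_zero, div_self (hDne k), Dcar_ne_zero hq2 k]
    have e2 : Kb q F (k - 1) ((0 : ℤ) - 1) = 0 := by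
      rw [Kb, if_neg]; omega
    have e3 : Kb q F (k - 1) (0 : ℤ) = 1 := by
      rw [Kb, if_pos ⟨le_refl _, by exact_mod_cast Nat.zero_le (k - 1)⟩]
      simp [Dcar_zero, div_self (hDne (k - 1)), Dcar_ne_zero hq2 (k - 1)]
    simp only [Nat.cast_zero, Int.toNat_zero]
    rw [e1, e2, e3]
    simp [Dcar_zero, zero_pow (by omega : q ≠ 0)]
  rcases eq_or_lt_of_le hnk with hkn | hlt
  · -- case m = k
    subst hkn
    have e1 : Kb q F n (n : ℤ) = 1 := by
      rw [Kb, if_pos ⟨by positivity, le_refl _⟩]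
      simp [Int.toNat_natCast, Dcar_zero, div_self (hDne n), Dcar_ne_zero hq2 n]
    have e2 : Kb q F (n - 1) ((n : ℤ) - 1) = 1 := by
      rw [Kb, if_pos ⟨by omega, by omega⟩]
      have ht : ((n : ℤ) - 1).toNat = n - 1 := by omega
      rw [ht]
      simp [Dcar_zero, div_self (hDne (n - 1)), Dcar_ne_zero hq2 (n - 1)]
    have e3 : Kb q F (n - 1) (n : ℤ) = 0 := by
      rw [Kb, if_neg]
      push_cast [Nat.cast_sub hn1]
      omega
    rw [e1, e2, e3]
    simp [zero_pow (by omega : q ≠ 0)]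
  · -- main case: 1 ≤ n < k
    obtain ⟨j, rfl⟩ : ∃ j, n = j + 1 := ⟨n - 1, by omega⟩
    obtain ⟨s, rfl⟩ : ∃ s, k = j + s + 2 := ⟨k - (j + 1) - 1, by omega⟩
    set A := Dcar q F (j + s + 1) with hA
    set B := Dcar q F j with hB
    set E := Dcar q F s with hE
    set u : Polynomial F := X ^ q ^ (j + 1) - X with hu
    set w : Polynomial F := X ^ q ^ (s + 1) - X with hwdef
    set v : Polynomial F := X ^ q ^ (j + s + 2) - X ^ q ^ (j + 1) with hv
    have hCharP : CharP (Polynomial F) p := inferInstance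
    have hqpow : ∀ t : ℕ, q ^ t = p ^ (e * t) := fun t => by rw [hq, pow_mul]
    have hw_pow : w ^ q ^ (j + 1) = v := by
      rw [hwdef, hqpow (j + 1), sub_pow_char_pow, ← hqpow (j + 1), ← pow_mul, ← pow_add,
        show s + 1 + (j + 1) = j + s + 2 from by omega, hv]
    have hsplit : (X ^ q ^ (j + s + 2) - X : Polynomial F) = u + v := by
      rw [hu, hv]; ring
    have hune : u ≠ 0 := X_pow_sub_X_ne_zero (le_trans hq2 (Nat.le_self_pow (by omega) q))
    have hwne : w ≠ 0 := X_pow_sub_X_ne_zero (le_trans hq2 (Nat.le_self_pow (by omega) q))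
    have hvne : v ≠ 0 := hw_pow ▸ pow_ne_zero _ hwne
    have hAne : A ≠ 0 := Dcar_ne_zero hq2 _
    have hBne : B ≠ 0 := Dcar_ne_zero hq2 _
    have hEne : E ≠ 0 := Dcar_ne_zero hq2 _
    -- key power computation
    have hwE : (w * E ^ q) ^ q ^ (j + 1) = v * E ^ q ^ (j + 2) := by
      rw [mul_pow, hw_pow, ← pow_mul]
      congr 2
      ring
    -- the three Kb values
    have hDn : Dcar q F (j + 1) = u * B ^ q := Dcar_succ q F j
    have hDs1 : Dcar q F (s + 1) = w * E ^ q := Dcar_succ q F s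
    have hDk : Dcar q F (j + s + 2) = (u + v) * A ^ q := by
      rw [show j + s + 2 = (j + s + 1) + 1 from rfl, Dcar_succ, ← hA, ← hsplit]
    have hL : Kb q F (j + s + 2) ((j : ℤ) + 1) =
        φ ((u + v) * A ^ q) / (φ (u * B ^ q) * φ (v * E ^ q ^ (j + 2))) := by
      rw [Kb, if_pos ⟨by positivity, by push_cast; omega⟩]
      rw [show ((j : ℤ) + 1).toNat = j + 1 from by omega,
        show (j + s + 2) - (j + 1) = s + 1 from by omega, hDk, hDn, hDs1,
        ← map_pow, hwE]
    have h1 : Kb q F (j + s + 1) ((j : ℤ) + 1 - 1) =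
        φ A / (φ B * φ ((w * E ^ q) ^ q ^ j)) := by
      rw [Kb, if_pos ⟨by omega, by push_cast; omega⟩]
      rw [show ((j : ℤ) + 1 - 1).toNat = j from by omega,
        show (j + s + 1) - j = s + 1 from by omega, hDs1, ← map_pow]
    have h2 : Kb q F (j + s + 1) ((j : ℤ) + 1) =
        φ A / (φ (u * B ^ q) * φ (E ^ q ^ (j + 1))) := by
      rw [Kb, if_pos ⟨by positivity, by push_cast; omega⟩]
      rw [show ((j : ℤ) + 1).toNat = j + 1 from by omega,
        show (j + s + 1) - (j + 1) = s from by omega, hDn, ← map_pow, ← hE]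
    have hpoly1 : ((B * (w * E ^ q) ^ q ^ j) ^ q : Polynomial F)
        = B ^ q * (v * E ^ q ^ (j + 2)) := by
      rw [mul_pow, ← pow_mul, show q ^ j * q = q ^ (j + 1) from by ring, hwE]
    have h1q : Kb q F (j + s + 1) ((j : ℤ) + 1 - 1) ^ q =
        φ (A ^ q) / φ (B ^ q * (v * E ^ q ^ (j + 2))) := by
      rw [h1, div_pow, ← map_pow, ← map_mul, ← map_pow, hpoly1]
    have hpoly2 : ((u * B ^ q * E ^ q ^ (j + 1)) ^ q : Polynomial F)
        = (u * B ^ q) ^ q * E ^ q ^ (j + 2) := by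
      rw [mul_pow, ← pow_mul, show q ^ (j + 1) * q = q ^ (j + 2) from by ring]
    have h2q : Kb q F (j + s + 1) ((j : ℤ) + 1) ^ q =
        φ (A ^ q) / φ ((u * B ^ q) ^ q * E ^ q ^ (j + 2)) := by
      rw [h2, div_pow, ← map_pow, ← map_mul, ← map_pow, hpoly2]
    -- rewrite the main goal
    push_cast
    rw [hL, h1q, h2q,
      show ((j : ℤ) + 1).toNat = j + 1 from by omega, hDn]
    -- now a pure field identity
    obtain ⟨r, hr⟩ : ∃ r, q = r + 1 := ⟨q - 1, by omega⟩
    have hqr : q - 1 = r := by omega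
    rw [hqr]
    simp only [map_mul, map_pow, map_add]
    rw [hr]
    exact pascal_field_key _ _ _ _ _ (φne u hune) (φne v hvne)
      (pow_ne_zero _ (φne B hBne)) (pow_ne_zero _ (φne E hEne)) r
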